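/- If a smooth irreducible complex variety N is unirational (a nonempty Zariski open subset is covered by images of ℂℙ¹), then every morphism from N to an abelian variety is constant. -/

import Mathlib

open scoped Topology OnePoint Manifold

/-- A holomorphic map from `ℂℙ¹ = OnePoint ℂ` to a complex manifold `N`
(holomorphy in both standard affine charts of `ℂℙ¹`). -/
def HoloFromSphere {E : Type*} [NormedAddCommGroup E] [NormedSpace ℂ E]
    {N : Type*} [TopologicalSpace N] [ChartedSpace E N]
    (c : OnePoint ℂ → N) : Prop :=
  MDifferentiable 𝓘(ℂ, ℂ) 𝓘(ℂ, E) (fun z : ℂ => c z) ∧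
  MDifferentiable 𝓘(ℂ, ℂ) 𝓘(ℂ, E)
    (fun z : ℂ => c (if z = 0 then ∞ else ((z⁻¹ : ℂ) : OnePoint ℂ)))


open Metric Set

lemma lift_sub_eq {n : ℕ} {Λ : AddSubgroup (Fin n → ℂ)} [DiscreteTopology Λ]
    {G₁ G₂ : ℂ → Fin n → ℂ} {s : Set ℂ} (hs : IsPreconnected s)
    (h1 : ContinuousOn G₁ s) (h2 : ContinuousOn G₂ s)
    (hl : ∀ z ∈ s, (QuotientAddGroup.mk (G₁ z) : (Fin n → ℂ) ⧸ Λ) = QuotientAddGroup.mk (G₂ z))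
    {z w : ℂ} (hz : z ∈ s) (hw : w ∈ s) : G₁ z - G₂ z = G₁ w - G₂ w := by
  have hmem : ∀ x : s, G₁ x - G₂ x ∈ Λ := fun x =>
    (QuotientAddGroup.eq_iff_sub_mem).1 (hl x x.2)
  set ψ : s → Λ := fun x => ⟨G₁ x - G₂ x, hmem x⟩ with hψ
  have hc : Continuous ψ := Continuous.subtype_mk
    ((h1.restrict).sub (h2.restrict)) _
  have hlc : IsLocallyConstant ψ := (IsLocallyConstant.iff_continuous ψ).2 hc
  haveI : PreconnectedSpace s := isPreconnected_iff_preconnectedSpace.1 hs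
  have := hlc.apply_eq_of_preconnectedSpace ⟨z, hz⟩ ⟨w, hw⟩
  exact congrArg Subtype.val this

lemma lift_deriv_eq {n : ℕ} {Λ : AddSubgroup (Fin n → ℂ)} [DiscreteTopology Λ]
    {G₁ G₂ : ℂ → Fin n → ℂ} {s₁ s₂ : Set ℂ} (h₁o : IsOpen s₁) (h₂o : IsOpen s₂)
    (hd₁ : DifferentiableOn ℂ G₁ s₁) (hd₂ : DifferentiableOn ℂ G₂ s₂)
    {g : ℂ → (Fin n → ℂ) ⧸ Λ}
    (hl₁ : ∀ z ∈ s₁, (QuotientAddGroup.mk (G₁ z) : (Fin n → ℂ) ⧸ Λ) = g z)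
    (hl₂ : ∀ z ∈ s₂, (QuotientAddGroup.mk (G₂ z) : (Fin n → ℂ) ⧸ Λ) = g z)
    {w : ℂ} (hw₁ : w ∈ s₁) (hw₂ : w ∈ s₂) : deriv G₁ w = deriv G₂ w := by
  obtain ⟨r, hr, hball⟩ := Metric.isOpen_iff.1 (h₁o.inter h₂o) w ⟨hw₁, hw₂⟩
  have hb1 : ball w r ⊆ s₁ := hball.trans inter_subset_left
  have hb2 : ball w r ⊆ s₂ := hball.trans inter_subset_right
  have hsub : ∀ z ∈ ball w r, G₁ z - G₂ z = G₁ w - G₂ w := fun z hz =>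
    lift_sub_eq (convex_ball w r).isPreconnected
      ((hd₁.continuousOn).mono hb1) ((hd₂.continuousOn).mono hb2)
      (fun u hu => (hl₁ u (hb1 hu)).trans (hl₂ u (hb2 hu)).symm)
      hz (mem_ball_self hr)
  have heq : G₁ =ᶠ[nhds w] fun z => G₂ z + (G₁ w - G₂ w) := by
    filter_upwards [isOpen_ball.mem_nhds (mem_ball_self hr)] with z hz
    have := hsub z hz
    abel_nf at this ⊢
    linear_combination (norm := module) this
  rw [heq.deriv_eq, deriv_add_const]

lemma torus_const {n : ℕ} {Λ : AddSubgroup (Fin n → ℂ)} [DiscreteTopology Λ]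
    (g g' : ℂ → (Fin n → ℂ) ⧸ Λ)
    (hg : ∀ w : ℂ, ∃ r > 0, ∃ G : ℂ → Fin n → ℂ, DifferentiableOn ℂ G (ball w r) ∧
      ∀ z ∈ ball w r, (QuotientAddGroup.mk (G z) : (Fin n → ℂ) ⧸ Λ) = g z)
    (hg' : ∀ w : ℂ, ∃ r > 0, ∃ G : ℂ → Fin n → ℂ, DifferentiableOn ℂ G (ball w r) ∧
      ∀ z ∈ ball w r, (QuotientAddGroup.mk (G z) : (Fin n → ℂ) ⧸ Λ) = g' z)
    (hrel : ∀ z : ℂ, z ≠ 0 → g' z = g z⁻¹) :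
    (∀ z w : ℂ, g z = g w) ∧ g' 0 = g 0 := by
  classical
  choose r hr G hGd hGl using hg
  set D : ℂ → Fin n → ℂ := fun w => deriv (G w) w with hD
  -- D agrees with deriv of any chosen lift
  have hD2 : ∀ w : ℂ, ∀ w' ∈ ball w (r w), D w' = deriv (G w) w' := by
    intro w w' hw'
    exact lift_deriv_eq isOpen_ball isOpen_ball (hGd w') (hGd w)
      (hGl w') (hGl w) (mem_ball_self (hr w')) hw'
  -- D is entire
  have hDdiff : Differentiable ℂ D := by
    intro w
    have h1 : AnalyticOnNhd ℂ (G w) (ball w (r w)) := (hGd w).analyticOnNhd isOpen_ball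
    have h2 : DifferentiableAt ℂ (deriv (G w)) w :=
      ((h1.deriv) w (mem_ball_self (hr w))).differentiableAt
    have heq : D =ᶠ[nhds w] deriv (G w) :=
      Filter.eventually_of_mem (isOpen_ball.mem_nhds (mem_ball_self (hr w))) (hD2 w)
    exact h2.congr_of_eventuallyEq heq
  -- the lift of g' near 0
  obtain ⟨r0, hr0, G0, hG0d, hG0l⟩ := hg' 0
  have hG0a : AnalyticOnNhd ℂ G0 (ball 0 r0) := hG0d.analyticOnNhd isOpen_ball
  obtain ⟨M, hM⟩ := (isCompact_closedBall (0:ℂ) (r0/2)).exists_bound_of_continuousOn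
    ((hG0a.deriv).continuousOn.mono (by
      intro x hx
      simpa using lt_of_le_of_lt (mem_closedBall_zero_iff.1 hx) (by linarith)))
  have hM0 : 0 ≤ M := le_trans (norm_nonneg _) (hM 0 (mem_closedBall_self (by positivity)))
  -- key relation near infinity
  have hkey : ∀ z : ℂ, z ≠ 0 → ‖z‖ ≤ r0/4 → D z⁻¹ = (-(z^2)) • deriv G0 z := by
    intro z hz hzr
    set w := z⁻¹ with hwdef
    set s : Set ℂ := {(0:ℂ)}ᶜ ∩ (fun u : ℂ => u⁻¹) ⁻¹' (ball w (r w)) with hs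
    have hmem : ∀ u : ℂ, u ∈ s → u ≠ 0 ∧ u⁻¹ ∈ ball w (r w) := by
      intro u hu
      exact ⟨mem_compl_singleton_iff.1 hu.1, hu.2⟩
    have hso : IsOpen s :=
      continuousOn_inv₀.isOpen_inter_preimage isOpen_compl_singleton isOpen_ball
    have hzs : z ∈ s := by
      refine ⟨mem_compl_singleton_iff.2 hz, ?_⟩
      show z⁻¹ ∈ ball w (r w)
      rw [← hwdef]
      exact mem_ball_self (hr w)
    have hHd : DifferentiableOn ℂ (fun u => G w u⁻¹) s := by
      intro u hu
      have h1 : DifferentiableAt ℂ (G w) u⁻¹ :=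
        (hGd w).differentiableAt (isOpen_ball.mem_nhds (hmem u hu).2)
      exact (h1.comp u (differentiableAt_inv (hmem u hu).1)).differentiableWithinAt
    have hHl : ∀ u ∈ s, (QuotientAddGroup.mk (G w u⁻¹) : (Fin n → ℂ) ⧸ Λ) = g' u := by
      intro u hu
      rw [hrel u (hmem u hu).1]
      exact hGl w _ (hmem u hu).2
    have hzball : z ∈ ball (0:ℂ) r0 := by
      simp only [mem_ball, dist_zero_right]
      linarith
    have hde : deriv (fun u => G w u⁻¹) z = deriv G0 z :=
      lift_deriv_eq hso isOpen_ball hHd hG0d hHl hG0l hzs hzball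
    have hGat : HasFDerivAt (G w) (fderiv ℂ (G w) w) w :=
      ((hGd w).differentiableAt (isOpen_ball.mem_nhds (mem_ball_self (hr w)))).hasFDerivAt
    have hinv : HasDerivAt (fun u : ℂ => u⁻¹) (-(z^2)⁻¹) z := hasDerivAt_inv hz
    have hcomp : HasDerivAt (fun u => G w u⁻¹) (fderiv ℂ (G w) w (-(z^2)⁻¹)) z := by
      have h := hGat.comp_hasDerivAt z hinv
      exact h
    have hfd : fderiv ℂ (G w) w (-(z^2)⁻¹) = (-(z^2)⁻¹) • D w := by
      have h1 : (-(z^2)⁻¹ : ℂ) = (-(z^2)⁻¹ : ℂ) • (1:ℂ) := by simp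
      rw [h1, map_smul]
      congr 1
    have hkey0 : (-(z^2)⁻¹ : ℂ) • D z⁻¹ = deriv G0 z := by
      rw [← hde, hcomp.deriv, hfd]
    have hz2 : (z^2 : ℂ) ≠ 0 := pow_ne_zero _ hz
    calc D z⁻¹ = (-(z^2)) • ((-(z^2)⁻¹ : ℂ) • D z⁻¹) := by
          rw [smul_smul]
          rw [show (-(z^2)) * (-(z^2)⁻¹) = (1:ℂ) by field_simp]
          rw [one_smul]
      _ = (-(z^2)) • deriv G0 z := by rw [hkey0]
  -- boundedness of D
  obtain ⟨M₁, hM₁⟩ := (isCompact_closedBall (0:ℂ) (4/r0)).exists_bound_of_continuousOn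
    hDdiff.continuous.continuousOn
  have hb : Bornology.IsBounded (Set.range D) := by
    rw [isBounded_iff_forall_norm_le]
    refine ⟨max M₁ ((r0/4)^2 * M), ?_⟩
    rintro _ ⟨x, rfl⟩
    by_cases hx : ‖x‖ ≤ 4/r0
    · exact le_max_of_le_left (hM₁ x (mem_closedBall_zero_iff.2 hx))
    · push_neg at hx
      have h4r : (0:ℝ) < 4/r0 := by positivity
      have hx0 : x ≠ 0 := by
        intro h; rw [h, norm_zero] at hx; linarith
      set z : ℂ := x⁻¹ with hzdef
      have hz0 : z ≠ 0 := inv_ne_zero hx0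
      have hzn : ‖z‖ ≤ r0/4 := by
        rw [hzdef, norm_inv]
        have h1 : ‖x‖⁻¹ ≤ (4/r0)⁻¹ := by
          apply inv_anti₀ h4r (le_of_lt hx)
        calc ‖x‖⁻¹ ≤ (4/r0)⁻¹ := h1
          _ = r0/4 := by rw [inv_div]
      have hk := hkey z hz0 hzn
      rw [hzdef, inv_inv] at hk
      rw [hk, norm_smul]
      have hn1 : ‖(-(z^2) : ℂ)‖ = ‖z‖^2 := by
        rw [norm_neg, norm_pow]
      have hn2 : ‖deriv G0 z‖ ≤ M := by
        apply hM
        rw [mem_closedBall_zero_iff]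
        linarith
      apply le_max_of_le_right
      rw [hn1]
      have hzn0 : (0:ℝ) ≤ ‖z‖ := norm_nonneg _
      calc ‖z‖^2 * ‖deriv G0 z‖ ≤ (r0/4)^2 * ‖deriv G0 z‖ := by
            apply mul_le_mul_of_nonneg_right _ (norm_nonneg _)
            nlinarith
        _ ≤ (r0/4)^2 * M := by
            apply mul_le_mul_of_nonneg_left hn2 (by positivity)
  -- Liouville
  have hDconst : ∀ a b : ℂ, D a = D b := fun a b =>
    hDdiff.apply_eq_apply_of_bounded hb a b
  have hD0 : D 0 = 0 := by
    by_contra h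
    have hpos : 0 < ‖D 0‖ := norm_pos_iff.2 h
    set ε := ‖D 0‖ with hε
    set t : ℝ := min (r0/4) (Real.sqrt (ε/(2*(M+1)))) with ht
    have hsq : 0 < ε/(2*(M+1)) := by positivity
    have ht0 : 0 < t := lt_min (by linarith) (Real.sqrt_pos.2 hsq)
    set z : ℂ := (t : ℂ) with hzdef
    have hz0 : z ≠ 0 := by
      simp only [hzdef, ne_eq, Complex.ofReal_eq_zero]
      linarith
    have hznorm : ‖z‖ = t := by
      rw [hzdef, Complex.norm_real, Real.norm_of_nonneg ht0.le]
    have hzn : ‖z‖ ≤ r0/4 := by rw [hznorm]; exact min_le_left _ _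
    have hk := hkey z hz0 hzn
    have h2 : D 0 = D z⁻¹ := hDconst 0 z⁻¹
    have h3 : ε ≤ t^2 * M := by
      rw [hε, h2, hk, norm_smul, norm_neg, norm_pow, hznorm]
      apply mul_le_mul_of_nonneg_left _ (by positivity)
      apply hM
      rw [mem_closedBall_zero_iff, hznorm]
      have := min_le_left (r0/4) (Real.sqrt (ε/(2*(M+1))))
      linarith
    have h4 : t^2 ≤ ε/(2*(M+1)) := by
      have h5 : t ≤ Real.sqrt (ε/(2*(M+1))) := min_le_right _ _
      calc t^2 ≤ (Real.sqrt (ε/(2*(M+1))))^2 := by nlinarith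
        _ = ε/(2*(M+1)) := Real.sq_sqrt hsq.le
    have hM1 : 0 < M + 1 := by linarith
    have h5 : t^2 * M ≤ ε/(2*(M+1)) * M := mul_le_mul_of_nonneg_right h4 hM0
    have h6 : ε/(2*(M+1)) * (M+1) = ε/2 := by field_simp
    have h7 : ε/(2*(M+1)) * M ≤ ε/(2*(M+1)) * (M+1) :=
      mul_le_mul_of_nonneg_left (by linarith) (by positivity)
    linarith
  have hDall : ∀ x : ℂ, D x = 0 := fun x => (hDconst x 0).trans hD0
  -- g is locally constant
  have hgloc : ∀ w : ℂ, ∀ z ∈ ball w (r w), g z = g w := by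
    intro w z hz
    have hcst : G w z = G w w := by
      apply (convex_ball w (r w)).is_const_of_fderivWithin_eq_zero (hGd w) ?_ hz
        (mem_ball_self (hr w))
      intro x hx
      rw [fderivWithin_of_isOpen isOpen_ball hx]
      have hdx : DifferentiableAt ℂ (G w) x := (hGd w).differentiableAt (isOpen_ball.mem_nhds hx)
      have h0 : deriv (G w) x = 0 := by rw [← hD2 w x hx]; exact hDall x
      have h1 := hdx.hasDerivAt
      rw [h0] at h1
      have hzero : ContinuousLinearMap.smulRight (1 : ℂ →L[ℂ] ℂ) (0 : Fin n → ℂ) = 0 := by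
        ext u i
        simp
      have h3 : HasFDerivAt (G w) (0 : ℂ →L[ℂ] Fin n → ℂ) x := hzero ▸ h1.hasFDerivAt
      exact h3.fderiv
    rw [← hGl w z hz, ← hGl w w (mem_ball_self (hr w)), hcst]
  have hgc : ∀ z w : ℂ, g z = g w := by
    have hlc : IsLocallyConstant g := (IsLocallyConstant.iff_exists_open g).2
      (fun x => ⟨ball x (r x), isOpen_ball, mem_ball_self (hr x), fun x' hx' => hgloc x x' hx'⟩)
    exact fun z w => hlc.apply_eq_of_preconnectedSpace z w
  refine ⟨hgc, ?_⟩
  -- g' 0 = g 0 by continuity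
  have hcont : ContinuousAt (fun z : ℂ => (QuotientAddGroup.mk (G0 z) : (Fin n → ℂ) ⧸ Λ)) 0 := by
    apply (QuotientAddGroup.continuous_mk.continuousAt).comp
    exact (hG0d.continuousOn).continuousAt (isOpen_ball.mem_nhds (mem_ball_self hr0))
  have h1 : Filter.Tendsto (fun z : ℂ => (QuotientAddGroup.mk (G0 z) : (Fin n → ℂ) ⧸ Λ))
      (nhdsWithin 0 {(0:ℂ)}ᶜ) (nhds (QuotientAddGroup.mk (G0 0))) :=
    hcont.tendsto.mono_left nhdsWithin_le_nhds
  have h2 : Filter.Tendsto (fun z : ℂ => (QuotientAddGroup.mk (G0 z) : (Fin n → ℂ) ⧸ Λ))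
      (nhdsWithin 0 {(0:ℂ)}ᶜ) (nhds (g 0)) := by
    have hev : ∀ᶠ z in nhdsWithin 0 {(0:ℂ)}ᶜ,
        (QuotientAddGroup.mk (G0 z) : (Fin n → ℂ) ⧸ Λ) = g 0 := by
      filter_upwards [self_mem_nhdsWithin,
        mem_nhdsWithin_of_mem_nhds (isOpen_ball.mem_nhds (mem_ball_self hr0))] with z hz1 hz2
      rw [hG0l z hz2, hrel z hz1, hgc z⁻¹ 0]
    exact Filter.Tendsto.congr' (hev.mono fun z hz => hz.symm) tendsto_const_nhds
  have h3 : (QuotientAddGroup.mk (G0 0) : (Fin n → ℂ) ⧸ Λ) = g 0 :=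
    tendsto_nhds_unique h1 h2
  rw [← hG0l 0 (mem_ball_self hr0), h3]

-- lift transfer lemma
lemma local_lifts {E : Type*} [NormedAddCommGroup E] [NormedSpace ℂ E]
    {N : Type*} [TopologicalSpace N] [ChartedSpace E N]
    [IsManifold 𝓘(ℂ, E) (⊤ : ℕ∞) N]
    (n : ℕ) (Λ : AddSubgroup (Fin n → ℂ))
    (f : N → (Fin n → ℂ) ⧸ Λ)
    (hf : ∀ x : N, ∃ V ∈ 𝓝 x, ∃ F : N → (Fin n → ℂ),
      MDifferentiableOn 𝓘(ℂ, E) 𝓘(ℂ, Fin n → ℂ) F V ∧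
      ∀ y ∈ V, (QuotientAddGroup.mk (F y) : (Fin n → ℂ) ⧸ Λ) = f y)
    (cc : ℂ → N) (hcc : MDifferentiable 𝓘(ℂ, ℂ) 𝓘(ℂ, E) cc) :
    ∀ w : ℂ, ∃ r > 0, ∃ G : ℂ → Fin n → ℂ, DifferentiableOn ℂ G (ball w r) ∧
      ∀ z ∈ ball w r, (QuotientAddGroup.mk (G z) : (Fin n → ℂ) ⧸ Λ) = f (cc z) := by
  intro w
  obtain ⟨V, hV, F, hFd, hFl⟩ := hf (cc w)
  have hccc : Continuous cc := hcc.continuous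
  have hW : cc ⁻¹' V ∈ 𝓝 w := hccc.continuousAt.preimage_mem_nhds hV
  obtain ⟨r, hrpos, hball⟩ := Metric.mem_nhds_iff.1 hW
  refine ⟨r, hrpos, F ∘ cc, ?_, ?_⟩
  · have h1 : MDifferentiableOn 𝓘(ℂ, ℂ) 𝓘(ℂ, Fin n → ℂ) (F ∘ cc) (ball w r) :=
      hFd.comp (hcc.mdifferentiableOn) hball
    exact mdifferentiableOn_iff_differentiableOn.1 h1
  · intro z hz
    exact hFl (cc z) (hball hz)

/-!
STATEMENT 2: If a smooth irreducible complex variety `N` is unirational — a nonempty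
Zariski open subset is covered by images of `ℂℙ¹` — then every morphism from `N` to an
abelian variety is constant.

`N` is modelled as a connected complex manifold; the abelian variety by its compact
complex torus `ℂⁿ/Λ`; `f : N → A` is holomorphic via holomorphic local lifts.
Unirationality enters through its standard consequence used in the proof: there is a dense
open subset `U` of `N` any two points of which can be joined by a chain of rational curves
(holomorphic images of `ℂℙ¹`) in `N`.  The conclusion is that `f` is constant.
-/
theorem stmt_2 {E : Type*} [NormedAddCommGroup E] [NormedSpace ℂ E]
    {N : Type*} [TopologicalSpace N] [ChartedSpace E N]
    [IsManifold 𝓘(ℂ, E) (⊤ : ℕ∞) N] [ConnectedSpace N]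
    (n : ℕ) (Λ : AddSubgroup (Fin n → ℂ))
    [DiscreteTopology Λ] [CompactSpace ((Fin n → ℂ) ⧸ Λ)]
    (f : N → (Fin n → ℂ) ⧸ Λ)
    -- `f` is holomorphic: it has holomorphic local lifts everywhere
    (hf : ∀ x : N, ∃ V ∈ 𝓝 x, ∃ F : N → (Fin n → ℂ),
      MDifferentiableOn 𝓘(ℂ, E) 𝓘(ℂ, Fin n → ℂ) F V ∧
      ∀ y ∈ V, (QuotientAddGroup.mk (F y) : (Fin n → ℂ) ⧸ Λ) = f y)
    (U : Set N) (hUopen : IsOpen U) (hUdense : Dense U)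
    -- unirationality: any two points of the dense open set `U` are joined by a chain of
    -- rational curves in `N`
    (hchain : ∀ x ∈ U, ∀ y ∈ U, ∃ (m : ℕ) (c : Fin m → OnePoint ℂ → N)
      (p : Fin (m + 1) → N),
      (∀ k, HoloFromSphere (E := E) (c k)) ∧ p 0 = x ∧ p (Fin.last m) = y ∧
      ∀ k : Fin m, p k.castSucc ∈ Set.range (c k) ∧ p k.succ ∈ Set.range (c k)) :
    ∀ x y : N, f x = f y := by
  -- f is constant along every rational curve
  have hcurve : ∀ c : OnePoint ℂ → N, HoloFromSphere (E := E) c →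
      ∀ a ∈ Set.range c, ∀ b ∈ Set.range c, f a = f b := by
    intro c hc a ha b hb
    set g : ℂ → (Fin n → ℂ) ⧸ Λ := fun z => f (c z) with hgdef
    set g' : ℂ → (Fin n → ℂ) ⧸ Λ :=
      fun z => f (c (if z = 0 then ∞ else ((z⁻¹ : ℂ) : OnePoint ℂ))) with hg'def
    have hg := local_lifts n Λ f hf _ hc.1
    have hg' := local_lifts n Λ f hf _ hc.2
    have hrel : ∀ z : ℂ, z ≠ 0 → g' z = g z⁻¹ := by
      intro z hz
      simp only [hg'def, hgdef, if_neg hz]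
    obtain ⟨hgc, h0⟩ := torus_const g g' hg hg' hrel
    have hall : ∀ q : OnePoint ℂ, f (c q) = g 0 := by
      intro q
      cases q with
      | infty =>
        have : g' 0 = f (c ∞) := by simp [hg'def]
        rw [← this, h0]
      | coe z => exact hgc z 0
    obtain ⟨za, rfl⟩ := ha
    obtain ⟨zb, rfl⟩ := hb
    rw [hall za, hall zb]
  -- f is constant on U via chains
  have hUconst : ∀ x ∈ U, ∀ y ∈ U, f x = f y := by
    intro x hx y hy
    obtain ⟨m, c, p, hholo, hp0, hplast, hpk⟩ := hchain x hx y hy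
    have hstep : ∀ k : Fin (m + 1), f (p k) = f (p 0) := by
      intro k
      induction k using Fin.induction with
      | zero => rfl
      | succ i ih =>
        have := hcurve (c i) (hholo i) _ (hpk i).2 _ (hpk i).1
        rw [this, ih]
    rw [← hp0, ← hplast, hstep (Fin.last m)]
  -- f is continuous
  have hfc : Continuous f := by
    rw [continuous_iff_continuousAt]
    intro x
    obtain ⟨V, hV, F, hFd, hFl⟩ := hf x
    have h1 : ContinuousAt (fun y => (QuotientAddGroup.mk (F y) : (Fin n → ℂ) ⧸ Λ)) x :=
      QuotientAddGroup.continuous_mk.continuousAt.comp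
        ((hFd.continuousOn).continuousAt hV)
    apply h1.congr
    filter_upwards [hV] with y hy
    exact hFl y hy
  -- conclude by density
  have hxU : ∃ x₀, x₀ ∈ U := by
    have : Nonempty N := inferInstance
    exact hUdense.nonempty.imp fun x hx => hx
  obtain ⟨x₀, hx₀⟩ := hxU
  have hclosed : IsClosed {z : N | f z = f x₀} :=
    isClosed_eq hfc continuous_const
  have hall : ∀ z : N, f z = f x₀ := by
    have hsub : U ⊆ {z : N | f z = f x₀} := fun z hz => hUconst z hz x₀ hx₀
    have : closure U ⊆ {z : N | f z = f x₀} := hclosed.closure_subset_iff.2 hsub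
    intro z
    exact this (hUdense z)
  intro x y
  rw [hall x, hall y]
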